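/- In the lattice L₁ = ⟨1⟩ ⊥ 9⟨−1⟩ with basis ℓ, e₀, e₁, …, e₈, the vector e' = ℓ − e₁ is primitive and isotropic, and the quotient lattice e'^⊥/ℤe' is isometric to 8⟨−1⟩, the odd negative-definite lattice ℤ⁸ with Gram matrix −Id. In particular e'^⊥/ℤe' is not isometric to e^⊥/ℤe for e = 3ℓ − (e₀+⋯+e₈), and hence no isometry of L₁ maps e to e'. -/

import Mathlib

/-- The odd unimodular lattice `⟨1⟩ ⊥ 9⟨−1⟩` of signature `(1,9)`: `ℤ¹⁰` with the
diagonal form `diag(1,−1,…,−1)`; coordinate `0` is `ℓ` and coordinate `i+1` is `e_i`. -/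
def formL1 : LinearMap.BilinForm ℤ (Fin 10 → ℤ) :=
  Matrix.toLinearMap₂' ℤ
    (Matrix.diagonal ![1, -1, -1, -1, -1, -1, -1, -1, -1, -1])

def IsPrimitiveVec {L : Type*} [AddCommGroup L] [Module ℤ L] (e : L) : Prop :=
  ∀ (n : ℤ) (x : L), e = n • x → n = 1 ∨ n = -1

/-- `e^⊥ = {x : L | x·e = 0}`. -/
def perpVec {L : Type*} [AddCommGroup L] [Module ℤ L]
    (B : LinearMap.BilinForm ℤ L) (e : L) : Submodule ℤ L :=
  LinearMap.ker (B.flip e)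

/-- The line `ℤe` inside `e^⊥`, for an isotropic vector `e`. -/
def zLine {L : Type*} [AddCommGroup L] [Module ℤ L]
    (B : LinearMap.BilinForm ℤ L) (e : L) (he : B e e = 0) :
    Submodule ℤ (perpVec B e) :=
  Submodule.span ℤ {⟨e, by simpa [perpVec, LinearMap.mem_ker] using he⟩}

/-- The form of `8⟨−1⟩`: `ℤ⁸` with Gram matrix `−Id`. -/
def formNegId (x y : Fin 8 → ℤ) : ℤ := -∑ i, x i * y i

/-- `e = 3ℓ − (e₀ + e₁ + ⋯ + e₈)`. -/
def eVec : Fin 10 → ℤ := ![3, -1, -1, -1, -1, -1, -1, -1, -1, -1]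

/-- `e' = ℓ − e₁`. -/
def e'Vec : Fin 10 → ℤ := ![1, 0, -1, 0, 0, 0, 0, 0, 0, 0]

lemma formL1_apply (x y : Fin 10 → ℤ) : formL1 x y =
    x 0 * y 0 - x 1 * y 1 - x 2 * y 2 - x 3 * y 3 - x 4 * y 4 - x 5 * y 5
      - x 6 * y 6 - x 7 * y 7 - x 8 * y 8 - x 9 * y 9 := by
  simp [formL1, Matrix.toLinearMap₂'_apply, Matrix.diagonal_apply, Fin.sum_univ_succ,
    Fin.succ, Fin.add_def]
  ring

lemma formL1_e' (x : Fin 10 → ℤ) : formL1 x e'Vec = x 0 + x 2 := by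
  rw [formL1_apply]
  simp only [show e'Vec 0 = 1 from rfl, show e'Vec 1 = 0 from rfl,
    show e'Vec 2 = -1 from rfl, show e'Vec 3 = 0 from rfl, show e'Vec 4 = 0 from rfl,
    show e'Vec 5 = 0 from rfl, show e'Vec 6 = 0 from rfl, show e'Vec 7 = 0 from rfl,
    show e'Vec 8 = 0 from rfl, show e'Vec 9 = 0 from rfl]
  ring

lemma formL1_e (x : Fin 10 → ℤ) : formL1 x eVec =
    3 * x 0 + x 1 + x 2 + x 3 + x 4 + x 5 + x 6 + x 7 + x 8 + x 9 := by
  rw [formL1_apply]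
  simp only [show eVec 0 = 3 from rfl, show eVec 1 = -1 from rfl,
    show eVec 2 = -1 from rfl, show eVec 3 = -1 from rfl, show eVec 4 = -1 from rfl,
    show eVec 5 = -1 from rfl, show eVec 6 = -1 from rfl, show eVec 7 = -1 from rfl,
    show eVec 8 = -1 from rfl, show eVec 9 = -1 from rfl]
  ring

lemma mem_perp_e' (x : Fin 10 → ℤ) :
    x ∈ perpVec formL1 e'Vec ↔ x 0 + x 2 = 0 := by
  rw [perpVec, LinearMap.mem_ker]; simp only [LinearMap.BilinForm.flip_apply]; rw [formL1_e']

lemma mem_perp_e (x : Fin 10 → ℤ) :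
    x ∈ perpVec formL1 eVec ↔
      3 * x 0 + x 1 + x 2 + x 3 + x 4 + x 5 + x 6 + x 7 + x 8 + x 9 = 0 := by
  rw [perpVec, LinearMap.mem_ker]; simp only [LinearMap.BilinForm.flip_apply]; rw [formL1_e]

lemma even_norm_of_perp_e (x : Fin 10 → ℤ) (h : x ∈ perpVec formL1 eVec) :
    Even (formL1 x x) := by
  rw [mem_perp_e] at h
  have key : ∀ a : ℤ, ∃ k : ℤ, a * a = k + k - a := by
    intro a
    obtain ⟨k, hk⟩ := Int.even_mul_succ_self a
    exact ⟨k, by linear_combination hk⟩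
  obtain ⟨k0, h0⟩ := key (x 0); obtain ⟨k1, h1⟩ := key (x 1)
  obtain ⟨k2, h2⟩ := key (x 2); obtain ⟨k3, h3⟩ := key (x 3)
  obtain ⟨k4, h4⟩ := key (x 4); obtain ⟨k5, h5⟩ := key (x 5)
  obtain ⟨k6, h6⟩ := key (x 6); obtain ⟨k7, h7⟩ := key (x 7)
  obtain ⟨k8, h8⟩ := key (x 8); obtain ⟨k9, h9⟩ := key (x 9)
  refine ⟨k0 - k1 - k2 - k3 - k4 - k5 - k6 - k7 - k8 - k9 - 2 * x 0, ?_⟩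
  rw [formL1_apply]
  linarith

lemma hiso'_pf : formL1 e'Vec e'Vec = 0 := by rw [formL1_e']; rfl
lemma hiso_pf : formL1 eVec eVec = 0 := by rw [formL1_e]; rfl

def idx8 : Fin 8 → Fin 10 := ![1, 3, 4, 5, 6, 7, 8, 9]

def proj8 : (Fin 10 → ℤ) →ₗ[ℤ] (Fin 8 → ℤ) :=
  LinearMap.pi fun i => LinearMap.proj (idx8 i)

def sec8 : (Fin 8 → ℤ) →ₗ[ℤ] (Fin 10 → ℤ) where
  toFun v := ![0, v 0, 0, v 1, v 2, v 3, v 4, v 5, v 6, v 7]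
  map_add' u v := by
    funext j; fin_cases j <;> rfl
  map_smul' c v := by
    funext j; fin_cases j <;> first | rfl | simp

def sec8' : (Fin 8 → ℤ) →ₗ[ℤ] (perpVec formL1 e'Vec) :=
  LinearMap.codRestrict _ sec8 fun v => (mem_perp_e' _).2 (by simp [sec8])

def prP : (perpVec formL1 e'Vec) →ₗ[ℤ] (Fin 8 → ℤ) :=
  proj8.comp (perpVec formL1 e'Vec).subtype

lemma zLine_le_ker : zLine formL1 e'Vec hiso'_pf ≤ LinearMap.ker prP := by
  rw [zLine, Submodule.span_le, Set.singleton_subset_iff]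
  simp only [SetLike.mem_coe, LinearMap.mem_ker]
  funext i
  fin_cases i <;> rfl

def qmap : (perpVec formL1 e'Vec ⧸ zLine formL1 e'Vec hiso'_pf) →ₗ[ℤ] (Fin 8 → ℤ) :=
  Submodule.liftQ _ prP zLine_le_ker

def imap : (Fin 8 → ℤ) →ₗ[ℤ] (perpVec formL1 e'Vec ⧸ zLine formL1 e'Vec hiso'_pf) :=
  (zLine formL1 e'Vec hiso'_pf).mkQ.comp sec8'

lemma comp1 : qmap.comp imap = LinearMap.id := by
  apply LinearMap.ext
  intro v
  show qmap ((zLine formL1 e'Vec hiso'_pf).mkQ (sec8' v)) = v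
  rw [Submodule.mkQ_apply, qmap, Submodule.liftQ_apply]
  funext i
  fin_cases i
  · show v 0 = v 0; rfl
  · show v 1 = v 1; rfl
  · show v 2 = v 2; rfl
  · show v 3 = v 3; rfl
  · show v 4 = v 4; rfl
  · show v 5 = v 5; rfl
  · show v 6 = v 6; rfl
  · show v 7 = v 7; rfl

lemma comp2 : imap.comp qmap = LinearMap.id := by
  apply Submodule.linearMap_qext
  apply LinearMap.ext
  intro x
  show imap (qmap (Submodule.Quotient.mk x)) = Submodule.Quotient.mk x
  have hq : qmap (Submodule.Quotient.mk x) = prP x := Submodule.liftQ_apply _ prP x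
  rw [hq]
  show (zLine formL1 e'Vec hiso'_pf).mkQ (sec8' (prP x)) = Submodule.Quotient.mk x
  rw [Submodule.mkQ_apply, Submodule.Quotient.eq]
  have hx : x.1 0 + x.1 2 = 0 := (mem_perp_e' x.1).1 x.2
  rw [zLine, Submodule.mem_span_singleton]
  refine ⟨-(x.1 0), ?_⟩
  apply Subtype.ext
  show -(x.1 0) • e'Vec = (sec8 (prP x) : Fin 10 → ℤ) - x.1
  funext j
  fin_cases j
  · show -(x.1 0) * 1 = 0 - x.1 0; ring
  · show -(x.1 0) * 0 = x.1 1 - x.1 1; ring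
  · show -(x.1 0) * (-1) = 0 - x.1 2; linarith
  · show -(x.1 0) * 0 = x.1 3 - x.1 3; ring
  · show -(x.1 0) * 0 = x.1 4 - x.1 4; ring
  · show -(x.1 0) * 0 = x.1 5 - x.1 5; ring
  · show -(x.1 0) * 0 = x.1 6 - x.1 6; ring
  · show -(x.1 0) * 0 = x.1 7 - x.1 7; ring
  · show -(x.1 0) * 0 = x.1 8 - x.1 8; ring
  · show -(x.1 0) * 0 = x.1 9 - x.1 9; ring

def phi : (perpVec formL1 e'Vec ⧸ zLine formL1 e'Vec hiso'_pf) ≃ₗ[ℤ] (Fin 8 → ℤ) :=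
  LinearEquiv.ofLinear qmap imap comp1 comp2

lemma phi_form (x y : perpVec formL1 e'Vec) :
    formNegId (phi (Submodule.Quotient.mk x)) (phi (Submodule.Quotient.mk y)) =
      formL1 (x : Fin 10 → ℤ) (y : Fin 10 → ℤ) := by
  have hx : x.1 0 = -x.1 2 := by
    have := (mem_perp_e' x.1).1 x.2; linarith
  have hy : y.1 0 = -y.1 2 := by
    have := (mem_perp_e' y.1).1 y.2; linarith
  have hq : ∀ z : perpVec formL1 e'Vec,
      phi (Submodule.Quotient.mk z) = prP z := fun z => Submodule.liftQ_apply _ prP z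
  rw [hq, hq, formNegId, Fin.sum_univ_eight, formL1_apply]
  show -((x.1 1) * (y.1 1) + (x.1 3) * (y.1 3) + (x.1 4) * (y.1 4) + (x.1 5) * (y.1 5)
      + (x.1 6) * (y.1 6) + (x.1 7) * (y.1 7) + (x.1 8) * (y.1 8) + (x.1 9) * (y.1 9)) = _
  rw [hx, hy]
  ring

lemma u3_norm : formL1 ![0,0,0,1,0,0,0,0,0,0] ![0,0,0,1,0,0,0,0,0,0] = -1 := by
  rw [formL1_apply]
  show (0:ℤ)*0 - 0*0 - 0*0 - 1*1 - 0*0 - 0*0 - 0*0 - 0*0 - 0*0 - 0*0 = -1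
  norm_num

lemma not_even_neg_one : ¬ Even (-1 : ℤ) := by decide

/-- In `⟨1⟩ ⊥ 9⟨−1⟩`, the vector `e' = ℓ − e₁` is primitive and
isotropic, `e'^⊥/ℤe'` is isometric to `8⟨−1⟩`; it is not isometric to `e^⊥/ℤe` for
`e = 3ℓ − Σ e_i`, and hence no isometry of the lattice maps `e` to `e'`. -/
theorem conic_class_not_equivalent :
    IsPrimitiveVec e'Vec ∧
    ∃ (hiso' : formL1 e'Vec e'Vec = 0) (hiso : formL1 eVec eVec = 0),
      (∃ φ : (perpVec formL1 e'Vec ⧸ zLine formL1 e'Vec hiso') ≃ₗ[ℤ] (Fin 8 → ℤ),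
        ∀ x y : perpVec formL1 e'Vec,
          formNegId (φ (Submodule.Quotient.mk x)) (φ (Submodule.Quotient.mk y)) =
            formL1 (x : Fin 10 → ℤ) (y : Fin 10 → ℤ)) ∧
      (∀ (BQ' : LinearMap.BilinForm ℤ (perpVec formL1 e'Vec ⧸ zLine formL1 e'Vec hiso'))
          (BQ : LinearMap.BilinForm ℤ (perpVec formL1 eVec ⧸ zLine formL1 eVec hiso)),
        (∀ x y : perpVec formL1 e'Vec,
          BQ' (Submodule.Quotient.mk x) (Submodule.Quotient.mk y) =
            formL1 (x : Fin 10 → ℤ) (y : Fin 10 → ℤ)) →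
        (∀ x y : perpVec formL1 eVec,
          BQ (Submodule.Quotient.mk x) (Submodule.Quotient.mk y) =
            formL1 (x : Fin 10 → ℤ) (y : Fin 10 → ℤ)) →
        ¬ ∃ ψ : (perpVec formL1 e'Vec ⧸ zLine formL1 e'Vec hiso') ≃ₗ[ℤ]
              (perpVec formL1 eVec ⧸ zLine formL1 eVec hiso),
            ∀ a b, BQ (ψ a) (ψ b) = BQ' a b) ∧
      ¬ ∃ g : (Fin 10 → ℤ) ≃ₗ[ℤ] (Fin 10 → ℤ),
          (∀ x y, formL1 (g x) (g y) = formL1 x y) ∧ g eVec = e'Vec := by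
  refine ⟨?_, hiso'_pf, hiso_pf, ⟨phi, phi_form⟩, ?_, ?_⟩
  · -- primitivity
    intro n x h
    have h0 : (1 : ℤ) = n * x 0 := congrFun h 0
    exact Int.isUnit_iff.mp (IsUnit.of_mul_eq_one (a := n) (x 0) h0.symm)
  · -- no isometry of quotient forms
    rintro BQ' BQ hBQ' hBQ ⟨ψ, hψ⟩
    have humem : (![0,0,0,1,0,0,0,0,0,0] : Fin 10 → ℤ) ∈ perpVec formL1 e'Vec := by
      rw [mem_perp_e']; rfl
    set u : perpVec formL1 e'Vec := ⟨![0,0,0,1,0,0,0,0,0,0], humem⟩ with hu_def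
    have hu : BQ' (Submodule.Quotient.mk u) (Submodule.Quotient.mk u) = -1 := by
      rw [hBQ']; exact u3_norm
    obtain ⟨y, hy⟩ :=
      Submodule.Quotient.mk_surjective _ (ψ (Submodule.Quotient.mk u))
    have h2 : formL1 (y : Fin 10 → ℤ) (y : Fin 10 → ℤ) = -1 := by
      rw [← hBQ y y, hy, hψ, hu]
    have h4 := even_norm_of_perp_e _ y.2
    rw [h2] at h4
    exact not_even_neg_one h4
  · -- no global isometry
    rintro ⟨g, hg, hge⟩
    set w := g.symm ![0,0,0,1,0,0,0,0,0,0] with hw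
    have h1 : formL1 w eVec = 0 := by
      have h := hg w eVec
      rw [g.apply_symm_apply, hge] at h
      rw [← h, formL1_e']
      rfl
    have h2 : formL1 w w = -1 := by
      have h := hg w w
      rw [g.apply_symm_apply] at h
      rw [← h]
      exact u3_norm
    have hm : w ∈ perpVec formL1 eVec := by
      rw [mem_perp_e]
      rw [formL1_e] at h1
      exact h1
    have h4 := even_norm_of_perp_e w hm
    rw [h2] at h4
    exact not_even_neg_one h4
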